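/- Let s and n be positive integers with s ≤ n. Define the s×s rational matrix B by B_{ij} = (2j−1)!·(C(s−i, 2j−1) − C(n+i−1, 2j−1)) for 1 ≤ i, j ≤ s, where C(a,b) denotes the binomial coefficient (equal to 0 when b > a). Define the lower-triangular s×s rational matrix M by M_{ij} = (−1)^{i+j} · C(i−1, j−1) · ∏_{l=j}^{i−1} (n−s+i+l)/(n−s+l) for i ≥ j, and M_{ij} = 0 for i < j. Then the matrix U := M·B is upper triangular (i.e. U_{kl} = 0 whenever k > l), and its diagonal entries are U_{ii} = −(i−1)! · ∏_{l=i}^{2i−1} (n+l−s). -/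

import Mathlib

set_option maxRecDepth 4000
set_option maxHeartbeats 1600000
open Polynomial Finset

lemma cast_fact_choose (a b : ℕ) :
    (b.factorial : ℚ) * (a.choose b : ℚ) = ∏ r ∈ Finset.range b, ((a : ℚ) - r) := by
  rw [← Nat.cast_mul, ← Nat.descFactorial_eq_factorial_mul_choose]
  induction b with
  | zero => simp
  | succ b ih =>
      rw [Nat.descFactorial_succ, Finset.prod_range_succ, Nat.cast_mul, ih, mul_comm]
      by_cases h : b < a
      · congr 1
        push_cast [Nat.cast_sub h.le]
        ring
      · rw [Nat.sub_eq_zero_of_le (not_lt.mp h), Nat.cast_zero]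
        rcases Nat.lt_succ_iff_lt_or_eq.mp (Nat.lt_succ_of_le (not_lt.mp h)) with h' | h'
        · have : (a : ℚ) - a = 0 := by ring
          rw [Finset.prod_eq_zero (Finset.mem_range.mpr h') this]
          simp
        · simp [← h']

lemma coeff_comp_neg_X (p : Polynomial ℚ) (n : ℕ) :
    (p.comp (-Polynomial.X)).coeff n = (-1 : ℚ) ^ n * p.coeff n := by
  induction p using Polynomial.induction_on' with
  | add p q hp hq => simp [Polynomial.add_comp, hp, hq, mul_add]
  | monomial m a =>
      rw [Polynomial.monomial_comp, neg_pow (Polynomial.X : Polynomial ℚ) m,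
        show ((-1 : Polynomial ℚ)) = Polynomial.C (-1) from by simp, ← Polynomial.C_pow,
        ← mul_assoc, ← Polynomial.C_mul, Polynomial.coeff_C_mul, Polynomial.coeff_X_pow,
        Polynomial.coeff_monomial]
      rcases eq_or_ne n m with rfl | h
      · simp [mul_comm]
      · simp [h, Ne.symm h]

lemma coeff_interpolate (s : Finset ℕ) (v : ℕ → ℚ) (r : ℕ → ℚ) :
    (Lagrange.interpolate s v r).coeff (s.card - 1)
      = ∑ i ∈ s, r i * Lagrange.nodalWeight s v i := by
  rw [Lagrange.interpolate_apply, Polynomial.finset_sum_coeff]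
  refine Finset.sum_congr rfl fun i hi => ?_
  rw [Polynomial.coeff_C_mul, Lagrange.basis_eq_prod_sub_inv_mul_nodal_div hi,
    ← Lagrange.nodal_erase_eq_nodal_div hi, Polynomial.coeff_C_mul]
  have hmon : (Lagrange.nodal (s.erase i) v).Monic := Lagrange.nodal_monic
  have hdeg : (Lagrange.nodal (s.erase i) v).natDegree = s.card - 1 := by
    rw [Lagrange.natDegree_nodal, Finset.card_erase_of_mem hi]
  rw [← hdeg, hmon.coeff_natDegree]
  ring

lemma divided_difference (s : Finset ℕ) (v : ℕ → ℚ) (hvs : Set.InjOn v s) (p : ℕ)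
    (hp : p < s.card) :
    ∑ i ∈ s, v i ^ p * Lagrange.nodalWeight s v i = if p = s.card - 1 then 1 else 0 := by
  have hdeg : ((Polynomial.X : Polynomial ℚ) ^ p).degree < s.card := by
    rw [Polynomial.degree_X_pow]; exact_mod_cast hp
  have h := Lagrange.eq_interpolate (v := v) hvs hdeg
  have h2 := congrArg (fun q : Polynomial ℚ => q.coeff (s.card - 1)) h
  simp only [Polynomial.eval_pow, Polynomial.eval_X] at h2
  rw [coeff_interpolate s v, Polynomial.coeff_X_pow] at h2
  rw [← h2]
  rcases eq_or_ne p (s.card - 1) with rfl | hne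
  · simp
  · simp only [if_neg hne, if_neg (fun h : s.card - 1 = p => hne h.symm)]

/-- shift a product over `Ioc`. -/
lemma prod_Ioc_shift (g : ℕ → ℚ) (c a b : ℕ) :
    ∏ l ∈ Finset.Ioc a b, g (c + l) = ∏ l ∈ Finset.Ioc (c + a) (c + b), g l := by
  rw [← Finset.map_add_left_Ioc, Finset.prod_map]
  rfl

noncomputable def tq (m j : ℕ) : ℚ := (j : ℚ) + ((m : ℚ) + 1) / 2

noncomputable def vq (m j : ℕ) : ℚ := tq m j ^ 2

lemma vq_sub (m i j : ℕ) :
    vq m j - vq m i = ((j : ℚ) - i) * ((i : ℚ) + j + m + 1) := by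
  simp only [vq, tq]; ring

lemma vq_inj (m : ℕ) : Function.Injective (vq m) := by
  intro i j h
  have h2 : ((j : ℚ) - i) * ((i : ℚ) + j + m + 1) = 0 := by
    rw [← vq_sub, h, sub_self]
  have hpos : ((i : ℚ) + j + m + 1) ≠ 0 := by positivity
  have h3 : ((j : ℚ) - i) = 0 := by
    rcases mul_eq_zero.mp h2 with h3 | h3
    · exact h3
    · exact absurd h3 hpos
  have : (j : ℚ) = i := by linarith
  exact_mod_cast this.symm

lemma prod_jsub (j : ℕ) : ∏ i ∈ Finset.range j, ((j : ℚ) - i) = (j.factorial : ℚ) := by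
  rw [← Finset.prod_range_reflect]
  have : ∀ i ∈ Finset.range j, (j : ℚ) - ((j - 1 - i : ℕ) : ℚ) = (i : ℚ) + 1 := by
    intro i hi
    have hij : i < j := Finset.mem_range.mp hi
    have h1 : j - 1 - i = j - (i + 1) := by omega
    rw [h1, Nat.cast_sub (by omega)]
    push_cast
    ring
  rw [Finset.prod_congr rfl this]
  exact_mod_cast congrArg (Nat.cast : ℕ → ℚ) (Finset.prod_range_add_one_eq_factorial j)

lemma prod_jsub' (j k : ℕ) (hj : j ≤ k) :
    ∏ i ∈ Finset.Ico (j + 1) (k + 1), ((j : ℚ) - i)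
      = (-1 : ℚ) ^ (k - j) * ((k - j).factorial : ℚ) := by
  rw [Finset.prod_Ico_eq_prod_range]
  have hc : k + 1 - (j + 1) = k - j := by omega
  rw [hc]
  have : ∀ i ∈ Finset.range (k - j), (j : ℚ) - ((j + 1 + i : ℕ) : ℚ)
      = (-1 : ℚ) * ((i : ℚ) + 1) := by
    intro i _
    push_cast
    ring
  rw [Finset.prod_congr rfl this, Finset.prod_mul_distrib, Finset.prod_const,
    Finset.card_range]
  congr 1
  exact_mod_cast congrArg (Nat.cast : ℕ → ℚ) (Finset.prod_range_add_one_eq_factorial (k - j))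

lemma nodalWeight_eq (m k j : ℕ) (hj : j ≤ k) :
    Lagrange.nodalWeight (Finset.range (k + 1)) (vq m) j
      = ((-1 : ℚ) ^ (k - j) * (j.factorial : ℚ) * ((k - j).factorial : ℚ))⁻¹
        * ((2 * (j : ℚ) + m + 1) / ∏ i ∈ Finset.range (k + 1), ((i : ℚ) + j + m + 1)) := by
  have hjmem : j ∈ Finset.range (k + 1) := Finset.mem_range.mpr (by omega)
  have hsplit : (Finset.range (k + 1)).erase j
      = Finset.range j ∪ Finset.Ico (j + 1) (k + 1) := by
    ext i
    simp only [Finset.mem_erase, Finset.mem_range, Finset.mem_union, Finset.mem_Ico]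
    omega
  have hdisj : Disjoint (Finset.range j) (Finset.Ico (j + 1) (k + 1)) := by
    rw [Finset.disjoint_left]
    intro i hi hi2
    simp only [Finset.mem_range] at hi
    simp only [Finset.mem_Ico] at hi2
    omega
  rw [Lagrange.nodalWeight]
  have hfac : ∀ i ∈ (Finset.range (k + 1)).erase j,
      (vq m j - vq m i)⁻¹ = (((j : ℚ) - i) * ((i : ℚ) + j + m + 1))⁻¹ := by
    intro i _
    rw [vq_sub]
  rw [Finset.prod_congr rfl hfac]
  rw [Finset.prod_inv_distrib, Finset.prod_mul_distrib, hsplit,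
    Finset.prod_union hdisj, Finset.prod_union hdisj, prod_jsub, prod_jsub' j k hj]
  have hB : (∏ i ∈ Finset.range j, ((i : ℚ) + j + m + 1))
      * ∏ i ∈ Finset.Ico (j + 1) (k + 1), ((i : ℚ) + j + m + 1)
      = (∏ i ∈ Finset.range (k + 1), ((i : ℚ) + j + m + 1)) / (2 * (j : ℚ) + m + 1) := by
    have hme := Finset.mul_prod_erase (Finset.range (k + 1))
      (fun i => ((i : ℚ) + j + m + 1)) hjmem
    have hjne : ((j : ℚ) + j + m + 1) ≠ 0 := by positivity
    have : (∏ i ∈ (Finset.range (k + 1)).erase j, ((i : ℚ) + j + m + 1))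
        = (∏ i ∈ Finset.range (k + 1), ((i : ℚ) + j + m + 1)) / ((j : ℚ) + j + m + 1) := by
      rw [eq_div_iff hjne, mul_comm]
      exact hme
    rw [← Finset.prod_union hdisj, ← hsplit, this]
    congr 1
    ring
  rw [hB]
  rw [mul_inv, inv_div]
  ring

noncomputable def Mv (m k j : ℕ) : ℚ :=
  (-1 : ℚ) ^ ((k + 1) + (j + 1)) * (k.choose j : ℚ) *
    ∏ l ∈ Finset.Icc (j + 1) k, ((m + (k + 1) + l : ℕ) : ℚ) / ((m + l : ℕ) : ℚ)

noncomputable def Ck (m k : ℕ) : ℚ :=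
  (k.factorial : ℚ) * (∏ l ∈ Finset.Icc (k + 1) (2 * k + 1), ((m + l : ℕ) : ℚ)) / 2

lemma Mv_mul_t (m k j : ℕ) (hj : j ≤ k) :
    Mv m k j * tq m j = Ck m k * Lagrange.nodalWeight (Finset.range (k + 1)) (vq m) j := by
  rw [nodalWeight_eq m k j hj]
  set g : ℕ → ℚ := fun l => ((m + l : ℕ) : ℚ) with hg
  have hg0 : ∀ l, 1 ≤ l → g l ≠ 0 := by
    intro l hl
    simp only [hg, Ne, Nat.cast_eq_zero]
    omega
  set D : ℕ → ℚ := fun q => ∏ l ∈ Finset.Ioc 0 q, g l with hD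
  have hDcons : ∀ a b : ℕ, a ≤ b → D a * ∏ l ∈ Finset.Ioc a b, g l = D b :=
    fun a b h => Finset.prod_Ioc_consecutive g (Nat.zero_le a) h
  have hD0 : ∀ q, D q ≠ 0 := by
    intro q
    simp only [hD]
    rw [Finset.prod_ne_zero_iff]
    intro l hl
    exact hg0 l (Finset.mem_Ioc.mp hl).1
  have hQ1 : ∏ l ∈ Finset.Icc (j + 1) k, g l = D k / D j := by
    rw [Finset.Icc_add_one_left_eq_Ioc, eq_div_iff (hD0 j), mul_comm]
    exact hDcons j k hj
  have hT : ∏ l ∈ Finset.Icc (k + 1) (2 * k + 1), g l = D (2 * k + 1) / D k := by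
    rw [Finset.Icc_add_one_left_eq_Ioc, eq_div_iff (hD0 k), mul_comm]
    exact hDcons k (2 * k + 1) (by omega)
  have hP1 : ∏ l ∈ Finset.Icc (j + 1) k, g (k + 1 + l) = D (2 * k + 1) / D (j + k + 1) := by
    rw [Finset.Icc_add_one_left_eq_Ioc, prod_Ioc_shift g (k + 1) j k,
      show k + 1 + j = j + k + 1 from by omega, show k + 1 + k = 2 * k + 1 from by omega,
      eq_div_iff (hD0 _), mul_comm]
    exact hDcons _ _ (by omega)
  have hR : ∏ i ∈ Finset.range (k + 1), ((i : ℚ) + j + m + 1) = D (j + k + 1) / D j := by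
    have h1 : ∀ i ∈ Finset.range (k + 1), ((i : ℚ) + j + m + 1) = g (j + 1 + i) := by
      intro i _
      simp only [hg]
      push_cast
      ring
    rw [Finset.prod_congr rfl h1]
    have h2 := Finset.prod_Ico_eq_prod_range g (j + 1) (j + k + 2)
    rw [show j + k + 2 - (j + 1) = k + 1 from by omega] at h2
    rw [← h2, show j + k + 2 = (j + k + 1) + 1 from rfl, Finset.Ico_add_one_right_eq_Icc,
      Finset.Icc_add_one_left_eq_Ioc, eq_div_iff (hD0 j), mul_comm]
    exact hDcons j (j + k + 1) (by omega)
  have hMv : Mv m k j = (-1 : ℚ) ^ (k - j) * (k.choose j : ℚ) *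
      ((D (2 * k + 1) / D (j + k + 1)) / (D k / D j)) := by
    rw [Mv]
    have hsign : (-1 : ℚ) ^ ((k + 1) + (j + 1)) = (-1 : ℚ) ^ (k - j) := by
      rw [show (k + 1) + (j + 1) = (k - j) + 2 * (j + 1) from by omega, pow_add, pow_mul]
      norm_num
    have hfa : ∀ l ∈ Finset.Icc (j + 1) k,
        ((m + (k + 1) + l : ℕ) : ℚ) / ((m + l : ℕ) : ℚ) = g (k + 1 + l) / g l := by
      intro l _
      simp only [hg]
      rw [show m + (k + 1) + l = m + (k + 1 + l) from by omega]
    rw [Finset.prod_congr rfl hfa, Finset.prod_div_distrib, hP1, hQ1, hsign]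
  rw [hMv, Ck, hT, hR]
  have hch : (k.choose j : ℚ) = (k.factorial : ℚ) /
      ((j.factorial : ℚ) * ((k - j).factorial : ℚ)) := by
    rw [eq_div_iff (by positivity), ← mul_assoc]
    exact_mod_cast Nat.choose_mul_factorial_mul_factorial hj
  rw [hch, tq]
  have hjf : (j.factorial : ℚ) ≠ 0 := by positivity
  have hkjf : ((k - j).factorial : ℚ) ≠ 0 := by positivity
  have h2jm : (2 * (j : ℚ) + m + 1) ≠ 0 := by positivity
  have hA := hD0 j
  have hB' := hD0 k
  have hC' := hD0 (j + k + 1)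
  have hE' := hD0 (2 * k + 1)
  rcases Nat.even_or_odd (k - j) with he | he
  · rw [he.neg_one_pow]
    field_simp
    ring
  · rw [he.neg_one_pow]
    field_simp
    ring

lemma S_sum (m k p : ℕ) (hp : p ≤ k) :
    ∑ j ∈ Finset.range (k + 1), Mv m k j * tq m j ^ (2 * p + 1)
      = if p = k then Ck m k else 0 := by
  have hinj : Set.InjOn (vq m) (Finset.range (k + 1)) := (vq_inj m).injOn
  have hdd := divided_difference (Finset.range (k + 1)) (vq m) hinj p
    (by rw [Finset.card_range]; omega)
  rw [Finset.card_range, Nat.add_sub_cancel] at hdd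
  have hptw : ∀ j ∈ Finset.range (k + 1), Mv m k j * tq m j ^ (2 * p + 1)
      = Ck m k * (vq m j ^ p * Lagrange.nodalWeight (Finset.range (k + 1)) (vq m) j) := by
    intro j hj
    have hjk : j ≤ k := by
      have := Finset.mem_range.mp hj
      omega
    have h1 : Mv m k j * tq m j ^ (2 * p + 1)
        = (Mv m k j * tq m j) * (vq m j) ^ p := by
      rw [vq]
      ring
    rw [h1, Mv_mul_t m k j hjk]
    ring
  rw [Finset.sum_congr rfl hptw, ← Finset.mul_sum, hdd]
  split_ifs <;> simp

lemma master (m s k l : ℕ) (hks : k < s) (hlk : l ≤ k) :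
    ∑ j ∈ Finset.range (k + 1),
      Mv m k j * (((2 * l + 1).factorial : ℚ) *
        (((s - (j + 1)).choose (2 * l + 1) : ℚ) - ((s + m + j).choose (2 * l + 1) : ℚ)))
      = if l = k then -2 * Ck m k else 0 := by
  set c : ℚ := (s : ℚ) + ((m : ℚ) - 1) / 2 with hc
  set Fp : Polynomial ℚ := ∏ r ∈ Finset.range (2 * l + 1), (Polynomial.X - Polynomial.C (r : ℚ))
    with hFp
  have hFmon : Fp.Monic := Polynomial.monic_prod_of_monic _ _
    (fun r _ => Polynomial.monic_X_sub_C _)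
  have hFdeg : Fp.natDegree = 2 * l + 1 := by
    rw [hFp, Polynomial.natDegree_prod _ _ (fun r _ => Polynomial.X_sub_C_ne_zero _)]
    simp only [Polynomial.natDegree_X_sub_C]
    rw [Finset.sum_const, Finset.card_range, smul_eq_mul, mul_one]
  set G : Polynomial ℚ :=
    Fp.comp (Polynomial.C c - Polynomial.X) - Fp.comp (Polynomial.C c + Polynomial.X) with hG
  have hd1 : (Polynomial.C c - Polynomial.X).natDegree = 1 := by
    rw [show Polynomial.C c - Polynomial.X = -(Polynomial.X - Polynomial.C c) from by ring,
      Polynomial.natDegree_neg, Polynomial.natDegree_X_sub_C]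
  have hd2 : (Polynomial.C c + Polynomial.X).natDegree = 1 := by
    rw [add_comm, Polynomial.natDegree_X_add_C]
  have hGdeg : G.natDegree < 2 * l + 2 := by
    have h1 := Polynomial.natDegree_comp_le (p := Fp) (q := Polynomial.C c - Polynomial.X)
    have h2 := Polynomial.natDegree_comp_le (p := Fp) (q := Polynomial.C c + Polynomial.X)
    rw [hd1, hFdeg] at h1
    rw [hd2, hFdeg] at h2
    have := Polynomial.natDegree_sub_le (Fp.comp (Polynomial.C c - Polynomial.X))
      (Fp.comp (Polynomial.C c + Polynomial.X))
    rw [hG]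
    omega
  have hGodd : ∀ r, Even r → G.coeff r = 0 := by
    intro r hre
    have hcomp : G.comp (-Polynomial.X) = -G := by
      rw [hG, Polynomial.sub_comp, Polynomial.comp_assoc, Polynomial.comp_assoc]
      have e1 : (Polynomial.C c - Polynomial.X).comp (-Polynomial.X)
          = Polynomial.C c + Polynomial.X := by
        simp [Polynomial.sub_comp, sub_neg_eq_add]
      have e2 : (Polynomial.C c + Polynomial.X).comp (-Polynomial.X)
          = Polynomial.C c - Polynomial.X := by
        simp [Polynomial.add_comp, sub_eq_add_neg]
      rw [e1, e2]
      ring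
    have h1 := coeff_comp_neg_X G r
    rw [hcomp, Polynomial.coeff_neg, hre.neg_one_pow, one_mul] at h1
    linarith
  have hGtop : G.coeff (2 * l + 1) = -2 := by
    have h1 := Polynomial.coeff_comp_degree_mul_degree (p := Fp)
      (q := Polynomial.C c - Polynomial.X) (by rw [hd1]; omega)
    have h2 := Polynomial.coeff_comp_degree_mul_degree (p := Fp)
      (q := Polynomial.C c + Polynomial.X) (by rw [hd2]; omega)
    have hl1 : (Polynomial.C c - Polynomial.X).leadingCoeff = -1 := by
      rw [show Polynomial.C c - Polynomial.X = -(Polynomial.X - Polynomial.C c) from by ring,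
        Polynomial.leadingCoeff_neg, (Polynomial.monic_X_sub_C c).leadingCoeff]
    have hl2 : (Polynomial.C c + Polynomial.X).leadingCoeff = 1 := by
      rw [add_comm]
      exact (Polynomial.monic_X_add_C c).leadingCoeff
    rw [hd1, hFdeg, hl1, hFmon.leadingCoeff, mul_one] at h1
    rw [hd2, hFdeg, hl2, hFmon.leadingCoeff, mul_one] at h2
    rw [hG, Polynomial.coeff_sub, h1, h2]
    have : Odd (2 * l + 1) := ⟨l, rfl⟩
    rw [this.neg_one_pow, one_pow]
    norm_num
  have hBval : ∀ j ∈ Finset.range (k + 1),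
      ((2 * l + 1).factorial : ℚ) *
        (((s - (j + 1)).choose (2 * l + 1) : ℚ) - ((s + m + j).choose (2 * l + 1) : ℚ))
      = G.eval (tq m j) := by
    intro j hj
    have hjs : j + 1 ≤ s := by
      have := Finset.mem_range.mp hj
      omega
    have hGe : G.eval (tq m j) = Fp.eval (c - tq m j) - Fp.eval (c + tq m j) := by
      simp [hG, Polynomial.eval_comp]
    have hFe : ∀ x : ℚ, Fp.eval x = ∏ r ∈ Finset.range (2 * l + 1), (x - (r : ℚ)) := by
      intro x
      rw [hFp, Polynomial.eval_prod]
      simp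
    have hc1 : c - tq m j = ((s - (j + 1) : ℕ) : ℚ) := by
      rw [Nat.cast_sub hjs, hc, tq]
      push_cast
      ring
    have hc2 : c + tq m j = ((s + m + j : ℕ) : ℚ) := by
      rw [hc, tq]
      push_cast
      ring
    rw [hGe, hFe, hFe, hc1, hc2, ← cast_fact_choose, ← cast_fact_choose, mul_sub]
  have hrw : ∑ j ∈ Finset.range (k + 1),
      Mv m k j * (((2 * l + 1).factorial : ℚ) *
        (((s - (j + 1)).choose (2 * l + 1) : ℚ) - ((s + m + j).choose (2 * l + 1) : ℚ)))
      = ∑ j ∈ Finset.range (k + 1), Mv m k j * G.eval (tq m j) :=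
    Finset.sum_congr rfl fun j hj => by rw [hBval j hj]
  rw [hrw]
  have hEval : ∀ j ∈ Finset.range (k + 1),
      Mv m k j * G.eval (tq m j)
        = ∑ r ∈ Finset.range (2 * l + 2), G.coeff r * (Mv m k j * tq m j ^ r) := by
    intro j _
    rw [Polynomial.eval_eq_sum_range' hGdeg, Finset.mul_sum]
    exact Finset.sum_congr rfl fun r _ => by ring
  rw [Finset.sum_congr rfl hEval, Finset.sum_comm]
  have hterm : ∀ r ∈ Finset.range (2 * l + 2),
      (∑ j ∈ Finset.range (k + 1), G.coeff r * (Mv m k j * tq m j ^ r))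
        = if r = 2 * l + 1 then (if l = k then -2 * Ck m k else 0) else 0 := by
    intro r hr
    rw [← Finset.mul_sum]
    rcases Nat.even_or_odd r with hre | hro
    · rw [hGodd r hre, zero_mul]
      rw [if_neg]
      intro hcon
      subst hcon
      have := Nat.even_iff.mp hre
      omega
    · obtain ⟨p, hp⟩ := hro
      have hrlt := Finset.mem_range.mp hr
      have hpk : p ≤ k := by omega
      rw [hp, S_sum m k p hpk]
      by_cases hpkeq : p = k
      · have hlkeq : l = k := by omega
        have hpl : 2 * p + 1 = 2 * l + 1 := by omega
        rw [if_pos hpkeq, if_pos hpl, if_pos hlkeq, hpl, hGtop]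
      · rw [if_neg hpkeq, mul_zero]
        by_cases hrl : 2 * p + 1 = 2 * l + 1
        · have : l ≠ k := by omega
          rw [if_pos hrl, if_neg this]
        · rw [if_neg hrl]
  rw [Finset.sum_congr rfl hterm, Finset.sum_ite_eq' (Finset.range (2 * l + 2)) (2 * l + 1)
    (fun _ => if l = k then -2 * Ck m k else 0)]
  rw [if_pos (Finset.mem_range.mpr (by omega))]

/-- LU decomposition (Proposition 1) for the 6V model with pDWBC at the free-fermion
point: with `B` the matrix `B_{ij} = (2j−1)!·(C(s−i,2j−1) − C(n+i−1,2j−1))` and `M = L⁻¹`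
the explicit lower-triangular matrix, the product `U = M·B` is upper triangular with
diagonal entries `U_{ii} = −(i−1)!·∏_{l=i}^{2i−1}(n+l−s)`. Indices `1 ≤ i,j ≤ s` are
represented by `i.val + 1`, `j.val + 1` for `i j : Fin s`. -/
theorem lu_decomposition_6V_pDWBC (s n : ℕ) (hs : 0 < s) (hsn : s ≤ n)
    (B M : Matrix (Fin s) (Fin s) ℚ)
    (hB : ∀ i j : Fin s, B i j =
      (Nat.factorial (2 * (j : ℕ) + 1) : ℚ) *
        ((Nat.choose (s - ((i : ℕ) + 1)) (2 * (j : ℕ) + 1) : ℚ)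
          - (Nat.choose (n + (i : ℕ)) (2 * (j : ℕ) + 1) : ℚ)))
    (hM : ∀ i j : Fin s, M i j =
      if (j : ℕ) ≤ (i : ℕ) then
        (-1 : ℚ) ^ (((i : ℕ) + 1) + ((j : ℕ) + 1)) * (Nat.choose (i : ℕ) (j : ℕ) : ℚ) *
          ∏ l ∈ Finset.Icc ((j : ℕ) + 1) (i : ℕ),
            ((n - s + ((i : ℕ) + 1) + l : ℕ) : ℚ) / ((n - s + l : ℕ) : ℚ)
      else 0) :
    (∀ k l : Fin s, (l : ℕ) < (k : ℕ) → (M * B) k l = 0) ∧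
    (∀ i : Fin s, (M * B) i i =
      -(Nat.factorial (i : ℕ) : ℚ) *
        ∏ l ∈ Finset.Icc ((i : ℕ) + 1) (2 * (i : ℕ) + 1), ((n + l - s : ℕ) : ℚ)) := by
  obtain ⟨m, rfl⟩ : ∃ m, n = s + m := ⟨n - s, by omega⟩
  have hms : s + m - s = m := by omega
  have key : ∀ k l : Fin s, (l : ℕ) ≤ (k : ℕ) → (M * B) k l =
      if (l : ℕ) = (k : ℕ) then -2 * Ck m (k : ℕ) else 0 := by
    intro k l hlk
    rw [Matrix.mul_apply]
    set f : ℕ → ℚ := fun jn => Mv m (k : ℕ) jn * (((2 * (l : ℕ) + 1).factorial : ℚ) *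
      (((s - (jn + 1)).choose (2 * (l : ℕ) + 1) : ℚ)
        - ((s + m + jn).choose (2 * (l : ℕ) + 1) : ℚ))) with hf
    have hMB : ∀ j : Fin s, M k j * B j l = f (j : ℕ) := by
      intro j
      rw [hM k j, hB j l, hf]
      by_cases hjk : (j : ℕ) ≤ (k : ℕ)
      · rw [if_pos hjk]
        simp only [Mv, hms]
      · rw [if_neg hjk]
        simp only [Mv, Nat.choose_eq_zero_of_lt (by omega : (k : ℕ) < (j : ℕ))]
        push_cast
        ring
    rw [Finset.sum_congr rfl fun j _ => hMB j]
    have h1 : ∑ j : Fin s, f (j : ℕ) = ∑ jn ∈ Finset.range s, f jn :=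
      Fin.sum_univ_eq_sum_range f s
    have h2 : ∑ jn ∈ Finset.range ((k : ℕ) + 1), f jn = ∑ jn ∈ Finset.range s, f jn := by
      refine Finset.sum_subset ?_ ?_
      · intro x hx
        simp only [Finset.mem_range] at hx ⊢
        have := k.isLt
        omega
      · intro x _ hx
        simp only [Finset.mem_range] at hx
        rw [hf]
        simp only [Mv, Nat.choose_eq_zero_of_lt (by omega : (k : ℕ) < x)]
        push_cast
        ring
    rw [h1, ← h2, hf]
    exact master m s (k : ℕ) (l : ℕ) k.isLt hlk
  constructor
  · intro k l hlt
    rw [key k l (le_of_lt hlt), if_neg (by omega)]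
  · intro i
    rw [key i i le_rfl, if_pos rfl, Ck]
    have hprod : ∏ l ∈ Finset.Icc ((i : ℕ) + 1) (2 * (i : ℕ) + 1), ((s + m + l - s : ℕ) : ℚ)
        = ∏ l ∈ Finset.Icc ((i : ℕ) + 1) (2 * (i : ℕ) + 1), ((m + l : ℕ) : ℚ) :=
      Finset.prod_congr rfl fun l _ => by rw [show s + m + l - s = m + l from by omega]
    rw [hprod]
    ring
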